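/- Full layered decomposition of the Haar matrix (Proposition 5): for N = 2^L with L ≥ 1, W_N = P_L·D_L·⋯·P_1·D_1·P_0, where P_0 = P̃_{2^L}^T, P_ℓ = diag( diag(P̃_{2^{L−ℓ}}^T, I_{2^{L−ℓ}}) · P̃_{2^{L−ℓ+1}}, I_{2^L − 2^{L−ℓ+1}} ) for ℓ = 1,…,L−1, P_L = I_{2^L}, and D_ℓ = diag( I_{2^{L−ℓ}} ⊗ W_2, I_{2^L − 2^{L−ℓ+1}} ) for ℓ = 1,…,L. All the P_ℓ are permutation matrices and each D_ℓ is block diagonal with 2^{L−ℓ} copies of the 2×2 block W_2 followed by 2^L − 2^{L−ℓ+1} ones on the diagonal. -/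

import Mathlib

open Matrix Complex

/-- Cast a square matrix along an equality of sizes. -/
noncomputable def castM {m n : ℕ} (h : m = n) (A : Matrix (Fin m) (Fin m) ℂ) :
    Matrix (Fin n) (Fin n) ℂ :=
  Matrix.reindex (finCongr h) (finCongr h) A

/-- Block diagonal matrix `diag(A, B)`. -/
noncomputable def blockDiag2 {m n : ℕ} (A : Matrix (Fin m) (Fin m) ℂ)
    (B : Matrix (Fin n) (Fin n) ℂ) : Matrix (Fin (m + n)) (Fin (m + n)) ℂ :=
  Matrix.reindex finSumFinEquiv finSumFinEquiv (Matrix.fromBlocks A 0 0 B)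

/-- 2×2 block matrix `[[A, B],[C, D]]` with m×m blocks, as an `(m+m)×(m+m)` matrix. -/
noncomputable def fromBlocks2 {m : ℕ} (A B C D : Matrix (Fin m) (Fin m) ℂ) :
    Matrix (Fin (m + m)) (Fin (m + m)) ℂ :=
  Matrix.reindex finSumFinEquiv finSumFinEquiv (Matrix.fromBlocks A B C D)

/-- Kronecker product of two square matrices, with row-major flattened indices. -/
noncomputable def kronF {m n : ℕ} (A : Matrix (Fin m) (Fin m) ℂ)
    (B : Matrix (Fin n) (Fin n) ℂ) : Matrix (Fin (m * n)) (Fin (m * n)) ℂ :=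
  Matrix.reindex finProdFinEquiv finProdFinEquiv (Matrix.kroneckerMap (· * ·) A B)

/-- The odd-even permutation matrix `P̃_N` (0-based indices):
`[P̃_N]_{i,k} = 1` iff (`2i < N` and `k = 2i`) or (`2i ≥ N` and `k = 2i+1−N`). -/
noncomputable def oddEvenPerm (N : ℕ) : Matrix (Fin N) (Fin N) ℂ :=
  Matrix.of fun i k =>
    if (2 * i.val < N ∧ k.val = 2 * i.val) ∨ (N ≤ 2 * i.val ∧ k.val = 2 * i.val + 1 - N)
    then 1 else 0

/-- The base 2×2 Haar matrix `W_2 = (1/√2)·[[1,1],[1,−1]]`. -/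
noncomputable def W2 : Matrix (Fin 2) (Fin 2) ℂ :=
  (1 / (Real.sqrt 2 : ℂ)) • !![1, 1; 1, -1]

/-- The Haar matrices: `W_1 = 1` and
`W_{2^{L+1}} = (1/√2)·[[W_{2^L}, W_{2^L}],[I, −I]]`. -/
noncomputable def haarMat : (L : ℕ) → Matrix (Fin (2 ^ L)) (Fin (2 ^ L)) ℂ
  | 0 => 1
  | L + 1 =>
      castM (by ring)
        ((1 / (Real.sqrt 2 : ℂ)) • fromBlocks2 (haarMat L) (haarMat L) 1 (-1))

/-- A matrix is a permutation matrix if it is the 0/1 matrix of some permutation. -/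
def IsPermutationMatrix {n : ℕ} (A : Matrix (Fin n) (Fin n) ℂ) : Prop :=
  ∃ σ : Equiv.Perm (Fin n), ∀ i k, A i k = if σ i = k then 1 else 0

/-- The permutation matrices `P_ℓ` of Proposition 5: `P_0 = P̃_{2^L}ᵀ`,
`P_ℓ = diag( diag(P̃_{2^{L−ℓ}}ᵀ, I_{2^{L−ℓ}}) · P̃_{2^{L−ℓ+1}}, I_{2^L − 2^{L−ℓ+1}} )`
for `1 ≤ ℓ ≤ L−1`, and `P_L = I_{2^L}`. -/
noncomputable def haarP (L ℓ : ℕ) : Matrix (Fin (2 ^ L)) (Fin (2 ^ L)) ℂ :=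
  if h0 : ℓ = 0 then (oddEvenPerm (2 ^ L))ᵀ
  else if h : ℓ < L then
    castM
      (Nat.add_sub_cancel' (Nat.pow_le_pow_right (by norm_num)
        (show L - ℓ + 1 ≤ L by omega)))
      (blockDiag2
        (castM (show 2 ^ (L - ℓ) + 2 ^ (L - ℓ) = 2 ^ (L - ℓ + 1) by ring)
            (blockDiag2 ((oddEvenPerm (2 ^ (L - ℓ)))ᵀ)
              (1 : Matrix (Fin (2 ^ (L - ℓ))) (Fin (2 ^ (L - ℓ))) ℂ))
          * oddEvenPerm (2 ^ (L - ℓ + 1)))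
        (1 : Matrix (Fin (2 ^ L - 2 ^ (L - ℓ + 1))) (Fin (2 ^ L - 2 ^ (L - ℓ + 1))) ℂ))
  else 1

/-- The block diagonal matrices `D_ℓ = diag(I_{2^{L−ℓ}} ⊗ W_2, I_{2^L − 2^{L−ℓ+1}})`
of Proposition 5 (for `1 ≤ ℓ ≤ L`). -/
noncomputable def haarD (L ℓ : ℕ) : Matrix (Fin (2 ^ L)) (Fin (2 ^ L)) ℂ :=
  if h : 1 ≤ ℓ ∧ ℓ ≤ L then
    castM
      (by
        have h2 : (2 : ℕ) ^ (L - ℓ + 1) ≤ 2 ^ L :=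
          Nat.pow_le_pow_right (by norm_num) (by omega)
        rw [← pow_succ]
        exact Nat.add_sub_cancel' h2)
      (blockDiag2 (kronF (1 : Matrix (Fin (2 ^ (L - ℓ))) (Fin (2 ^ (L - ℓ))) ℂ) W2)
        (1 : Matrix (Fin (2 ^ L - 2 ^ (L - ℓ + 1))) (Fin (2 ^ L - 2 ^ (L - ℓ + 1))) ℂ))
  else 1

section Lemmas

variable {m n p k k' : ℕ}

@[simp] lemma castM_apply (h : m = n) (A : Matrix (Fin m) (Fin m) ℂ) (i j : Fin n) :
    castM h A i j = A (Fin.cast h.symm i) (Fin.cast h.symm j) := rfl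

lemma castM_castM (h : m = n) (h' : n = p) (A : Matrix (Fin m) (Fin m) ℂ) :
    castM h' (castM h A) = castM (h.trans h') A := rfl

lemma castM_self (h : m = m) (A : Matrix (Fin m) (Fin m) ℂ) : castM h A = A := by
  ext i j; simp [castM_apply]

lemma castM_mul (h : m = n) (A B : Matrix (Fin m) (Fin m) ℂ) :
    castM h A * castM h B = castM h (A * B) := by
  unfold castM
  rw [Matrix.reindex_apply, Matrix.reindex_apply, Matrix.reindex_apply,
    Matrix.submatrix_mul_equiv]

lemma castM_mul_left (h : m = n) (A : Matrix (Fin m) (Fin m) ℂ)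
    (B : Matrix (Fin n) (Fin n) ℂ) :
    castM h A * B = castM h (A * castM h.symm B) := by
  rw [← castM_mul h, castM_castM, castM_self]

lemma castM_mul_right (h : m = n) (A : Matrix (Fin n) (Fin n) ℂ)
    (B : Matrix (Fin m) (Fin m) ℂ) :
    A * castM h B = castM h (castM h.symm A * B) := by
  rw [← castM_mul h, castM_castM, castM_self]

lemma castM_smul (h : m = n) (r : ℂ) (A : Matrix (Fin m) (Fin m) ℂ) :
    castM h (r • A) = r • castM h A := rfl

lemma castM_one (h : m = n) : castM h (1 : Matrix (Fin m) (Fin m) ℂ) = 1 := by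
  ext i j
  simp [castM_apply, Matrix.one_apply, Fin.ext_iff]

end Lemmas
section Lemmas2

variable {m n p q k k' : ℕ}

lemma finSumFinEquiv_symm_eq_left (i : Fin (m + n)) (h : (i : ℕ) < m) :
    finSumFinEquiv.symm i = Sum.inl ⟨i, h⟩ := by
  rw [Equiv.symm_apply_eq, finSumFinEquiv_apply_left]
  ext; rfl

lemma finSumFinEquiv_symm_eq_right (i : Fin (m + n)) (h : m ≤ (i : ℕ)) :
    finSumFinEquiv.symm i = Sum.inr ⟨(i : ℕ) - m, by omega⟩ := by
  rw [Equiv.symm_apply_eq, finSumFinEquiv_apply_right]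
  ext
  simp [Fin.natAdd]
  omega

lemma blockDiag2_apply (A : Matrix (Fin m) (Fin m) ℂ) (B : Matrix (Fin n) (Fin n) ℂ)
    (i j : Fin (m + n)) :
    blockDiag2 A B i j =
      if hi : (i : ℕ) < m then
        (if hj : (j : ℕ) < m then A ⟨i, hi⟩ ⟨j, hj⟩ else 0)
      else
        (if hj : (j : ℕ) < m then 0 else B ⟨(i : ℕ) - m, by omega⟩ ⟨(j : ℕ) - m, by omega⟩) := by
  unfold blockDiag2
  rw [Matrix.reindex_apply, Matrix.submatrix_apply]
  by_cases hi : (i : ℕ) < m <;> by_cases hj : (j : ℕ) < m <;>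
    simp [finSumFinEquiv_symm_eq_left, finSumFinEquiv_symm_eq_right, hi, hj,
      le_of_not_gt, Matrix.fromBlocks]

lemma blockDiag2_mul (A A' : Matrix (Fin m) (Fin m) ℂ) (B B' : Matrix (Fin n) (Fin n) ℂ) :
    blockDiag2 A B * blockDiag2 A' B' = blockDiag2 (A * A') (B * B') := by
  unfold blockDiag2
  rw [Matrix.reindex_apply, Matrix.reindex_apply, Matrix.reindex_apply,
    Matrix.submatrix_mul_equiv, Matrix.fromBlocks_multiply]
  simp

lemma blockDiag2_one : blockDiag2 (1 : Matrix (Fin m) (Fin m) ℂ) (1 : Matrix (Fin n) (Fin n) ℂ) = 1 := by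
  ext i j
  rw [blockDiag2_apply]
  have hij := i.isLt
  simp only [Matrix.one_apply, Fin.ext_iff, Fin.val_mk]
  split_ifs <;> first | rfl | (exfalso; omega)

lemma fromBlocks2_mul (A B C D A' B' C' D' : Matrix (Fin m) (Fin m) ℂ) :
    fromBlocks2 A B C D * fromBlocks2 A' B' C' D' =
      fromBlocks2 (A * A' + B * C') (A * B' + B * D') (C * A' + D * C') (C * B' + D * D') := by
  unfold fromBlocks2
  rw [Matrix.reindex_apply, Matrix.reindex_apply, Matrix.reindex_apply,
    Matrix.submatrix_mul_equiv, Matrix.fromBlocks_multiply]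

lemma blockDiag2_eq_fromBlocks2 (A B : Matrix (Fin m) (Fin m) ℂ) :
    blockDiag2 A B = fromBlocks2 A 0 0 B := rfl

/-- identity-padding of a matrix into a larger one -/
noncomputable def padM (h : m ≤ n) (A : Matrix (Fin m) (Fin m) ℂ) :
    Matrix (Fin n) (Fin n) ℂ :=
  castM (Nat.add_sub_cancel' h) (blockDiag2 A (1 : Matrix (Fin (n - m)) (Fin (n - m)) ℂ))

lemma padM_apply (h : m ≤ n) (A : Matrix (Fin m) (Fin m) ℂ) (i j : Fin n) :
    padM h A i j =
      if hi : (i : ℕ) < m then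
        (if hj : (j : ℕ) < m then A ⟨i, hi⟩ ⟨j, hj⟩ else 0)
      else (if (i : ℕ) = (j : ℕ) then 1 else 0) := by
  unfold padM
  rw [castM_apply, blockDiag2_apply]
  simp only [Matrix.one_apply, Fin.ext_iff, Fin.val_mk, Fin.coe_cast]
  split_ifs <;> first | rfl | (exfalso; omega)

lemma padM_mul (h : m ≤ n) (A B : Matrix (Fin m) (Fin m) ℂ) :
    padM h A * padM h B = padM h (A * B) := by
  unfold padM
  rw [castM_mul, blockDiag2_mul, one_mul]

lemma padM_one (h : m ≤ n) : padM h (1 : Matrix (Fin m) (Fin m) ℂ) = 1 := by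
  unfold padM
  rw [blockDiag2_one, castM_one]

lemma padM_padM (h : m ≤ n) (h' : n ≤ p) (A : Matrix (Fin m) (Fin m) ℂ) :
    padM h' (padM h A) = padM (h.trans h') A := by
  ext i j
  rw [padM_apply, padM_apply]
  simp only [padM_apply, Fin.val_mk]
  split_ifs <;> first | rfl | (exfalso; omega)

lemma padM_of_eq (h : m ≤ n) (e : m = n) (A : Matrix (Fin m) (Fin m) ℂ) :
    padM h A = castM e A := by
  subst e
  ext i j
  rw [padM_apply, castM_self]
  simp only [i.isLt, j.isLt, dif_pos]

end Lemmas2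
lemma padM_eq {m n k : ℕ} (h : m ≤ n) (e : m + k = n) (A : Matrix (Fin m) (Fin m) ℂ) :
    padM h A = castM e (blockDiag2 A (1 : Matrix (Fin k) (Fin k) ℂ)) := by
  ext i j
  rw [padM_apply, castM_apply, blockDiag2_apply]
  simp only [Matrix.one_apply, Fin.ext_iff, Fin.val_mk, Fin.coe_cast]
  split_ifs <;> first | rfl | (exfalso; omega)
section Perm

variable {m n : ℕ}

/-- matrix of a permutation -/
noncomputable def permMat (σ : Equiv.Perm (Fin n)) : Matrix (Fin n) (Fin n) ℂ :=
  Matrix.of fun i k => if σ i = k then 1 else 0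

lemma isPermutationMatrix_iff {A : Matrix (Fin n) (Fin n) ℂ} :
    IsPermutationMatrix A ↔ ∃ σ : Equiv.Perm (Fin n), A = permMat σ := by
  unfold IsPermutationMatrix permMat
  constructor
  · rintro ⟨σ, h⟩; exact ⟨σ, by ext i k; rw [h]; rfl⟩
  · rintro ⟨σ, h⟩; exact ⟨σ, by intro i k; rw [h]; rfl⟩

lemma permMat_mul (σ τ : Equiv.Perm (Fin n)) :
    permMat σ * permMat τ = permMat (σ.trans τ) := by
  ext i k
  simp only [permMat, Matrix.mul_apply, Matrix.of_apply, Equiv.trans_apply, ite_mul, one_mul,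
    zero_mul]
  rw [Finset.sum_ite_eq Finset.univ (σ i) (fun x => if τ x = k then (1 : ℂ) else 0)]
  simp
  congr

lemma permMat_one : permMat (1 : Equiv.Perm (Fin n)) = 1 := by
  ext i k
  simp [permMat, Matrix.one_apply]
  congr

lemma permMat_transpose (σ : Equiv.Perm (Fin n)) : (permMat σ)ᵀ = permMat σ⁻¹ := by
  ext i k
  simp only [Matrix.transpose_apply, permMat, Matrix.of_apply]
  congr 1
  exact propext ⟨fun h => by rw [← h]; simp, fun h => by rw [← h]; simp⟩

lemma permMat_mul_left (σ : Equiv.Perm (Fin n)) (A : Matrix (Fin n) (Fin n) ℂ) :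
    permMat σ * A = Matrix.of fun i j => A (σ i) j := by
  ext i j
  simp [permMat, Matrix.mul_apply, Finset.sum_ite_eq]

lemma permMat_mul_right (σ : Equiv.Perm (Fin n)) (A : Matrix (Fin n) (Fin n) ℂ) :
    A * (permMat σ)ᵀ = Matrix.of fun i j => A i (σ j) := by
  ext i j
  simp [permMat, Matrix.mul_apply, Matrix.transpose_apply]

lemma permMat_mul_permMat_transpose (σ : Equiv.Perm (Fin n)) :
    permMat σ * (permMat σ)ᵀ = 1 := by
  rw [permMat_transpose, permMat_mul]
  ext i k
  simp [permMat, Matrix.one_apply]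

lemma permMat_transpose_mul_permMat (σ : Equiv.Perm (Fin n)) :
    (permMat σ)ᵀ * permMat σ = 1 := by
  rw [permMat_transpose, permMat_mul]
  ext i k
  simp [permMat, Matrix.one_apply]

/-- the odd-even permutation -/
noncomputable def oePerm (N : ℕ) (hN : N % 2 = 0 ∨ N = 1) : Equiv.Perm (Fin N) :=
  Equiv.ofBijective
    (fun i => (⟨if 2 * i.val < N then 2 * i.val else 2 * i.val + 1 - N, by
        have := i.isLt; split <;> omega⟩ : Fin N))
    (Finite.injective_iff_bijective.mp (by
      intro a b hab
      have ha := a.isLt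
      have hb := b.isLt
      rw [Fin.ext_iff] at hab ⊢
      simp only [Fin.val_mk] at hab
      split_ifs at hab <;> omega))

lemma oePerm_apply_val (N : ℕ) (hN : N % 2 = 0 ∨ N = 1) (i : Fin N) :
    ((oePerm N hN i : Fin N) : ℕ) =
      if 2 * i.val < N then 2 * i.val else 2 * i.val + 1 - N := rfl

lemma oddEvenPerm_eq_permMat (N : ℕ) (hN : N % 2 = 0 ∨ N = 1) :
    oddEvenPerm N = permMat (oePerm N hN) := by
  ext i k
  simp only [oddEvenPerm, permMat, Matrix.of_apply]
  have hi := i.isLt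
  refine if_congr ?_ rfl rfl
  rw [Fin.ext_iff, oePerm_apply_val]
  split_ifs <;> omega

end Perm
section Entries

variable {m n : ℕ}

lemma castM_permMat (h : m = n) (σ : Equiv.Perm (Fin m)) :
    castM h (permMat σ) =
      permMat (((finCongr h.symm).trans σ).trans (finCongr h)) := by
  ext i k
  simp only [castM_apply, permMat, Matrix.of_apply, Equiv.trans_apply]
  refine if_congr ?_ rfl rfl
  rw [Fin.ext_iff, Fin.ext_iff]
  simp [finCongr]

lemma fromBlocks_perm_apply (σ : Equiv.Perm (Fin m)) (τ : Equiv.Perm (Fin n))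
    (x y : Fin m ⊕ Fin n) :
    Matrix.fromBlocks (permMat σ) 0 0 (permMat τ) x y =
      if Equiv.sumCongr σ τ x = y then 1 else 0 := by
  rcases x with a | a <;> rcases y with b | b <;>
    simp [Matrix.fromBlocks, permMat]

lemma blockDiag2_permMat (σ : Equiv.Perm (Fin m)) (τ : Equiv.Perm (Fin n)) :
    blockDiag2 (permMat σ) (permMat τ) =
      permMat ((finSumFinEquiv.symm.trans (Equiv.sumCongr σ τ)).trans finSumFinEquiv) := by
  ext i k
  unfold blockDiag2
  rw [Matrix.reindex_apply, Matrix.submatrix_apply, fromBlocks_perm_apply]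
  simp only [permMat, Matrix.of_apply, Equiv.trans_apply]
  refine if_congr ?_ rfl rfl
  constructor
  · intro h; rw [h]; simp
  · intro h; rw [← h]; simp

lemma W2_apply (b c : Fin 2) :
    W2 b c = (1 / (Real.sqrt 2 : ℂ)) * (if (b : ℕ) = 1 ∧ (c : ℕ) = 1 then -1 else 1) := by
  fin_cases b <;> fin_cases c <;> simp [W2]

lemma kronF_one_W2_apply (M : ℕ) (p q : Fin (M * 2)) :
    kronF (1 : Matrix (Fin M) (Fin M) ℂ) W2 p q =
      (if (p : ℕ) / 2 = (q : ℕ) / 2 then 1 else 0) *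
        ((1 / (Real.sqrt 2 : ℂ)) * (if (p : ℕ) % 2 = 1 ∧ (q : ℕ) % 2 = 1 then -1 else 1)) := by
  unfold kronF
  rw [Matrix.reindex_apply, Matrix.submatrix_apply]
  rcases hp : finProdFinEquiv.symm p with ⟨a, b⟩
  rcases hq : finProdFinEquiv.symm q with ⟨c, d⟩
  rw [Matrix.kroneckerMap_apply, W2_apply]
  have hp' : a = p.divNat ∧ b = p.modNat := by
    have := congrArg Prod.fst hp
    have := congrArg Prod.snd hp
    simp_all [finProdFinEquiv]
  have hq' : c = q.divNat ∧ d = q.modNat := by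
    have := congrArg Prod.fst hq
    have := congrArg Prod.snd hq
    simp_all [finProdFinEquiv]
  obtain ⟨rfl, rfl⟩ := hp'
  obtain ⟨rfl, rfl⟩ := hq'
  rw [Matrix.one_apply]
  refine congrArg₂ (· * ·) (if_congr ?_ rfl rfl) (congrArg _ (if_congr ?_ rfl rfl))
  · rw [Fin.ext_iff, Fin.coe_divNat, Fin.coe_divNat]
  · rw [Fin.coe_modNat, Fin.coe_modNat]

lemma fromBlocks2_apply (A B C D : Matrix (Fin m) (Fin m) ℂ) (i j : Fin (m + m)) :
    fromBlocks2 A B C D i j =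
      if hi : (i : ℕ) < m then
        (if hj : (j : ℕ) < m then A ⟨i, hi⟩ ⟨j, hj⟩ else B ⟨i, hi⟩ ⟨(j : ℕ) - m, by omega⟩)
      else
        (if hj : (j : ℕ) < m then C ⟨(i : ℕ) - m, by omega⟩ ⟨j, hj⟩
         else D ⟨(i : ℕ) - m, by omega⟩ ⟨(j : ℕ) - m, by omega⟩) := by
  unfold fromBlocks2
  rw [Matrix.reindex_apply, Matrix.submatrix_apply]
  by_cases hi : (i : ℕ) < m <;> by_cases hj : (j : ℕ) < m <;>
    simp [finSumFinEquiv_symm_eq_left, finSumFinEquiv_symm_eq_right, hi, hj,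
      le_of_not_gt, Matrix.fromBlocks]

end Entries
section Conj

lemma pow2_even (k : ℕ) : 2 ^ k % 2 = 0 ∨ 2 ^ k = 1 := by
  cases k with
  | zero => right; rfl
  | succ k => left; rw [pow_succ]; exact Nat.mul_mod_left _ _

lemma conj_kron (M n : ℕ) (hM : 1 ≤ M) (e : M * 2 = n) (e' : M + M = n) :
    oddEvenPerm n * castM e (kronF (1 : Matrix (Fin M) (Fin M) ℂ) W2) * (oddEvenPerm n)ᵀ =
      (1 / (Real.sqrt 2 : ℂ)) •
        castM e' (fromBlocks2 (1 : Matrix (Fin M) (Fin M) ℂ) 1 1 (-1)) := by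
  have hn : n % 2 = 0 ∨ n = 1 := by left; omega
  rw [oddEvenPerm_eq_permMat n hn, permMat_mul_right, permMat_mul_left]
  ext i j
  have hi := i.isLt
  have hj := j.isLt
  have Hi : (2 * i.val < n ∧ ((oePerm n hn) i : ℕ) = 2 * i.val) ∨
      (n ≤ 2 * i.val ∧ ((oePerm n hn) i : ℕ) = 2 * i.val + 1 - n) := by
    rw [oePerm_apply_val]
    split_ifs with h
    · exact Or.inl ⟨h, rfl⟩
    · exact Or.inr ⟨by omega, rfl⟩
  have Hj : (2 * j.val < n ∧ ((oePerm n hn) j : ℕ) = 2 * j.val) ∨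
      (n ≤ 2 * j.val ∧ ((oePerm n hn) j : ℕ) = 2 * j.val + 1 - n) := by
    rw [oePerm_apply_val]
    split_ifs with h
    · exact Or.inl ⟨h, rfl⟩
    · exact Or.inr ⟨by omega, rfl⟩
  have hsi := ((oePerm n hn) i).isLt
  have hsj := ((oePerm n hn) j).isLt
  simp only [Matrix.of_apply, Matrix.smul_apply, castM_apply, kronF_one_W2_apply,
    fromBlocks2_apply, Fin.coe_cast]
  simp only [Matrix.one_apply, Matrix.neg_apply, Fin.ext_iff, Fin.val_mk, smul_eq_mul,
    Fin.coe_cast]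
  split_ifs <;> try ring
  all_goals (exfalso; omega)

end Conj
section Cores

/-- top-left core of `P_ℓ` -/
noncomputable def coreP (k : ℕ) : Matrix (Fin (2 ^ (k + 1))) (Fin (2 ^ (k + 1))) ℂ :=
  castM (show 2 ^ k + 2 ^ k = 2 ^ (k + 1) by ring)
      (blockDiag2 ((oddEvenPerm (2 ^ k))ᵀ) (1 : Matrix (Fin (2 ^ k)) (Fin (2 ^ k)) ℂ))
    * oddEvenPerm (2 ^ (k + 1))

/-- top-left core of `D_ℓ` -/
noncomputable def coreD (k : ℕ) : Matrix (Fin (2 ^ (k + 1))) (Fin (2 ^ (k + 1))) ℂ :=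
  castM (show 2 ^ k * 2 = 2 ^ (k + 1) from rfl)
    (kronF (1 : Matrix (Fin (2 ^ k)) (Fin (2 ^ k)) ℂ) W2)

lemma pow2_le {a b : ℕ} (h : a ≤ b) : 2 ^ a ≤ 2 ^ b :=
  Nat.pow_le_pow_right (by norm_num) h

lemma haarP_zero (L : ℕ) : haarP L 0 = (oddEvenPerm (2 ^ L))ᵀ := by
  unfold haarP
  rw [dif_pos rfl]

lemma haarP_eq (L ℓ : ℕ) (h1 : 1 ≤ ℓ) (h : ℓ < L) (k : ℕ) (hk : L - ℓ = k) :
    haarP L ℓ = padM (pow2_le (by omega : k + 1 ≤ L)) (coreP k) := by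
  subst hk
  unfold haarP
  rw [dif_neg (by omega), dif_pos h]
  rfl

lemma haarP_top (L ℓ : ℕ) (h : L ≤ ℓ) (h0 : ℓ ≠ 0) : haarP L ℓ = 1 := by
  unfold haarP
  rw [dif_neg h0, dif_neg (by omega)]

lemma haarD_eq (L ℓ : ℕ) (h1 : 1 ≤ ℓ) (h : ℓ ≤ L) (k : ℕ) (hk : L - ℓ = k) :
    haarD L ℓ = padM (pow2_le (by omega : k + 1 ≤ L)) (coreD k) := by
  subst hk
  unfold haarD
  rw [dif_pos ⟨h1, h⟩]
  rfl

lemma haarP_succ (L ℓ : ℕ) (h1 : 1 ≤ ℓ) (h : ℓ ≤ L) :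
    haarP (L + 1) (ℓ + 1) = padM (pow2_le (Nat.le_succ L)) (haarP L ℓ) := by
  rcases eq_or_lt_of_le h with rfl | hlt
  · rw [haarP_top (ℓ + 1) (ℓ + 1) le_rfl (by omega), haarP_top ℓ ℓ le_rfl (by omega), padM_one]
  · rw [haarP_eq (L + 1) (ℓ + 1) (by omega) (by omega) (L - ℓ) (by omega),
      haarP_eq L ℓ h1 hlt (L - ℓ) rfl, padM_padM]

lemma haarD_succ (L ℓ : ℕ) (h1 : 1 ≤ ℓ) (h : ℓ ≤ L) :
    haarD (L + 1) (ℓ + 1) = padM (pow2_le (Nat.le_succ L)) (haarD L ℓ) := by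
  rw [haarD_eq (L + 1) (ℓ + 1) (by omega) (by omega) (L - ℓ) (by omega),
    haarD_eq L ℓ h1 h (L - ℓ) rfl, padM_padM]

lemma padM_self_eq {m n : ℕ} (h : m ≤ n) (e : m = n) (A : Matrix (Fin m) (Fin m) ℂ) :
    padM h A = castM e A := padM_of_eq h e A

lemma haarP_one (L : ℕ) (hL : 1 ≤ L) : haarP (L + 1) 1 = coreP L := by
  rw [haarP_eq (L + 1) 1 le_rfl (by omega) L rfl,
    padM_self_eq _ rfl, castM_self]

lemma haarD_one (L : ℕ) : haarD (L + 1) 1 = coreD L := by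
  rw [haarD_eq (L + 1) 1 le_rfl (by omega) L rfl,
    padM_self_eq _ rfl, castM_self]

lemma isPerm_haarP (L ℓ : ℕ) : IsPermutationMatrix (haarP L ℓ) := by
  rw [isPermutationMatrix_iff]
  by_cases h0 : ℓ = 0
  · subst h0
    rw [haarP_zero, oddEvenPerm_eq_permMat _ (pow2_even L), permMat_transpose]
    exact ⟨_, rfl⟩
  · by_cases h : ℓ < L
    · rw [haarP_eq L ℓ (by omega) h (L - ℓ) rfl]
      unfold padM coreP
      rw [oddEvenPerm_eq_permMat _ (pow2_even (L - ℓ)),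
        oddEvenPerm_eq_permMat _ (pow2_even (L - ℓ + 1)), permMat_transpose,
        ← permMat_one (n := 2 ^ (L - ℓ)), blockDiag2_permMat, castM_permMat, permMat_mul,
        ← permMat_one (n := 2 ^ L - 2 ^ (L - ℓ + 1)), blockDiag2_permMat, castM_permMat]
      exact ⟨_, rfl⟩
    · rw [haarP_top L ℓ (by omega) h0]
      exact ⟨1, permMat_one.symm⟩

end Cores
section Key

lemma oddEvenPerm_mul_transpose (N : ℕ) (hN : N % 2 = 0 ∨ N = 1) :
    oddEvenPerm N * (oddEvenPerm N)ᵀ = 1 := by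
  rw [oddEvenPerm_eq_permMat N hN]
  exact permMat_mul_permMat_transpose _

lemma transpose_mul_oddEvenPerm (N : ℕ) (hN : N % 2 = 0 ∨ N = 1) :
    (oddEvenPerm N)ᵀ * oddEvenPerm N = 1 := by
  rw [oddEvenPerm_eq_permMat N hN]
  exact permMat_transpose_mul_permMat _

lemma haarMat_succ (L : ℕ) :
    haarMat (L + 1) =
      castM (show 2 ^ L + 2 ^ L = 2 ^ (L + 1) by ring)
        ((1 / (Real.sqrt 2 : ℂ)) • fromBlocks2 (haarMat L) (haarMat L) 1 (-1)) := by
  simp only [haarMat]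

lemma key (L : ℕ) :
    haarMat (L + 1) =
      padM (pow2_le (Nat.le_succ L)) (haarMat L * oddEvenPerm (2 ^ L)) *
        (coreP L * coreD L) * (oddEvenPerm (2 ^ (L + 1)))ᵀ := by
  have e4 : 2 ^ L + 2 ^ L = 2 ^ (L + 1) := by ring
  have hconj := conj_kron (2 ^ L) (2 ^ (L + 1)) Nat.one_le_two_pow rfl e4
  rw [haarMat_succ L]
  unfold coreP
  rw [padM_eq (pow2_le (Nat.le_succ L)) e4]
  simp only [Matrix.mul_assoc]
  rw [show oddEvenPerm (2 ^ (L + 1)) * (coreD L * (oddEvenPerm (2 ^ (L + 1)))ᵀ) =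
      (1 / (Real.sqrt 2 : ℂ)) •
        castM e4 (fromBlocks2 (1 : Matrix (Fin (2 ^ L)) (Fin (2 ^ L)) ℂ) 1 1 (-1)) from by
    rw [← Matrix.mul_assoc]; exact hconj]
  rw [mul_smul_comm, mul_smul_comm, castM_mul, castM_mul, castM_smul]
  congr 1
  rw [← Matrix.mul_assoc, blockDiag2_mul, one_mul, Matrix.mul_assoc (haarMat L),
    oddEvenPerm_mul_transpose _ (pow2_even L), Matrix.mul_one,
    blockDiag2_eq_fromBlocks2, fromBlocks2_mul]
  congr 1 <;> try congr 1
  all_goals simp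

end Key
section Main

lemma oddEvenPerm_eq_one {N : ℕ} (h : N ≤ 2) : oddEvenPerm N = 1 := by
  ext i k
  have hi := i.isLt
  have hk := k.isLt
  simp only [oddEvenPerm, Matrix.of_apply, Matrix.one_apply, Fin.ext_iff]
  split_ifs <;> first | rfl | (exfalso; omega)

lemma prod_map_padM {m n : ℕ} {ι : Type*} (h : m ≤ n) (l : List ι)
    (g : ι → Matrix (Fin m) (Fin m) ℂ) :
    (l.map fun i => padM h (g i)).prod = padM h (l.map g).prod := by
  induction l with
  | nil => simp [padM_one]
  | cons a l ih => simp only [List.map_cons, List.prod_cons, ih, padM_mul]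

lemma haarMat_zero : haarMat 0 = 1 := by simp only [haarMat]

lemma main_eq : ∀ L : ℕ, 1 ≤ L →
    haarMat L =
      ((List.finRange L).reverse.map fun i : Fin L =>
          haarP L (i.val + 1) * haarD L (i.val + 1)).prod
        * haarP L 0 := by
  intro L
  induction L with
  | zero => omega
  | succ L ih =>
    intro _
    rcases Nat.eq_zero_or_pos L with rfl | hL
    · -- base case L = 0, i.e. size 2
      simp only [List.finRange_succ, List.finRange_zero, List.map_nil,
        List.reverse_cons, List.reverse_nil, List.nil_append, List.map_cons,
        List.prod_cons, List.prod_nil, Fin.val_zero, mul_one]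
      rw [haarP_top 1 1 le_rfl one_ne_zero, haarD_one 0, haarP_zero, one_mul]
      rw [key 0, haarMat_zero]
      unfold coreP
      rw [oddEvenPerm_eq_one (N := 2 ^ 0) (by norm_num),
        oddEvenPerm_eq_one (N := 2 ^ (0 + 1)) (by norm_num)]
      simp only [Matrix.transpose_one, blockDiag2_one, castM_one, padM_one, one_mul,
        Matrix.mul_one]
    · have ih' := ih hL
      rw [List.finRange_succ, List.reverse_cons, List.map_append, List.prod_append,
        ← List.map_reverse, List.map_map, List.map_cons, List.map_nil, List.prod_cons,
        List.prod_nil, mul_one]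
      have hcongr : ((List.finRange L).reverse.map
            ((fun i : Fin (L + 1) => haarP (L + 1) (i.val + 1) * haarD (L + 1) (i.val + 1)) ∘
              Fin.succ)) =
          (List.finRange L).reverse.map fun i : Fin L =>
            padM (pow2_le (Nat.le_succ L)) (haarP L (i.val + 1) * haarD L (i.val + 1)) := by
        apply List.map_congr_left
        intro i _
        simp only [Function.comp_apply, Fin.val_succ]
        rw [haarP_succ L (i.val + 1) (by omega) (by omega),
          haarD_succ L (i.val + 1) (by omega) (by omega), padM_mul]
      rw [hcongr, prod_map_padM]
      have hP : ((List.finRange L).reverse.map fun i : Fin L =>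
            haarP L (i.val + 1) * haarD L (i.val + 1)).prod =
          haarMat L * oddEvenPerm (2 ^ L) := by
        conv_rhs => rw [ih']
        rw [haarP_zero, Matrix.mul_assoc, transpose_mul_oddEvenPerm _ (pow2_even L),
          Matrix.mul_one]
      rw [hP, Fin.val_zero, haarP_one L hL, haarD_one L, haarP_zero]
      exact key L

end Main

/-- **Full layered decomposition of the Haar matrix** (Proposition 5):
`W_{2^L} = P_L·D_L·⋯·P_1·D_1·P_0`; moreover all `P_ℓ` are permutation matrices. -/
theorem haar_layered_decomposition (L : ℕ) (hL : 1 ≤ L) :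
    haarMat L =
        ((List.finRange L).reverse.map fun i : Fin L =>
            haarP L (i.val + 1) * haarD L (i.val + 1)).prod
          * haarP L 0
    ∧ ∀ ℓ ≤ L, IsPermutationMatrix (haarP L ℓ) := by
  exact ⟨main_eq L hL, fun ℓ _ => isPerm_haarP L ℓ⟩
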